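/- Fix an integer ν₀ ≥ 2. There exists a constant C > 0 such that for every integer ν ≥ ν₀ and every real λ, b_{ν₀}(λ) ≤ C · b_ν(λ); that is, the ratio b_ν(λ)^{−1}·b_{ν₀}(λ) is uniformly bounded in ν and λ. -/

import Mathlib

open Complex Filter

/-- The eigenvalue `b_ν(λ) = |Γ(ν − 1/2 + iλ)|² / (Γ(ν)·Γ(ν−1))` of the normalized
Berezin transform `(ν−1)B_ν` on the spherical function `e_{λ,b}`. -/
noncomputable def bEig (ν : ℕ) (l : ℝ) : ℝ :=
  ‖Complex.Gamma ((ν : ℂ) - 1/2 + l * Complex.I)‖ ^ 2 /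
    (Real.Gamma ν * Real.Gamma ((ν : ℝ) - 1))

lemma bEig_step (ν : ℕ) (hν : 2 ≤ ν) (l : ℝ) : bEig ν l ≤ bEig (ν + 1) l := by
  have hν2 : (2:ℝ) ≤ (ν:ℝ) := by exact_mod_cast hν
  set z : ℂ := (ν : ℂ) - 1/2 + l * Complex.I with hzdef
  have hre : z.re = (ν:ℝ) - 1/2 := by simp [hzdef]
  have him : z.im = l := by simp [hzdef]
  have hG : Complex.Gamma z ≠ 0 :=
    Complex.Gamma_ne_zero_of_re_pos (by rw [hre]; linarith)
  have hA : (0:ℝ) < ‖Complex.Gamma z‖ ^ 2 :=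
    pow_pos (norm_pos_iff.mpr hG) 2
  have h1 : ((ν + 1 : ℕ) : ℂ) - 1/2 + l * Complex.I = z + 1 := by
    rw [hzdef]; push_cast; ring
  have hGadd : Complex.Gamma (z + 1) = z * Complex.Gamma z :=
    Complex.Gamma_add_one z (by
      intro h
      have := congrArg Complex.re h
      rw [hre] at this
      simp at this
      linarith)
  have hK : (ν:ℝ) * ((ν:ℝ) - 1) ≤ ‖z‖ ^ 2 := by
    rw [Complex.sq_norm, Complex.normSq_apply, hre, him]
    nlinarith [mul_self_nonneg l]
  -- Gamma values
  have hGν : (0:ℝ) < Real.Gamma ν := Real.Gamma_pos_of_pos (by linarith)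
  have hGν1 : (0:ℝ) < Real.Gamma ((ν:ℝ) - 1) := Real.Gamma_pos_of_pos (by linarith)
  have hgadd : Real.Gamma ((ν:ℝ)) = ((ν:ℝ) - 1) * Real.Gamma ((ν:ℝ) - 1) := by
    have h0 : ((ν:ℝ) - 1) ≠ 0 := by intro h; rw [sub_eq_zero] at h; linarith [h.symm]
    have := Real.Gamma_add_one h0
    rw [show (ν:ℝ) - 1 + 1 = (ν:ℝ) by ring] at this
    exact this
  have hgadd2 : Real.Gamma (((ν+1 : ℕ) : ℝ)) = (ν:ℝ) * Real.Gamma ν := by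
    push_cast
    exact Real.Gamma_add_one (by linarith)
  have hgm1 : Real.Gamma (((ν+1 : ℕ) : ℝ) - 1) = Real.Gamma ν := by
    push_cast; ring_nf
  unfold bEig
  rw [h1, hGadd, hgadd2, hgm1, norm_mul, mul_pow, ← hzdef]
  rw [div_le_div_iff₀ (by positivity) (by positivity)]
  rw [hgadd]
  nlinarith [mul_le_mul_of_nonneg_right hK
    (mul_nonneg (mul_nonneg (by linarith) (by positivity)) (by positivity) :
      (0:ℝ) ≤ ((ν:ℝ) - 1) * ‖Complex.Gamma z‖ ^ 2 *
      Real.Gamma ((ν:ℝ) - 1) ^ 2)]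

/-- For a fixed integer `ν₀ ≥ 2`, there is a constant `C > 0` such that
`b_{ν₀}(λ) ≤ C·b_ν(λ)` for all integers `ν ≥ ν₀` and all real `λ`; i.e. the ratio
`b_ν(λ)⁻¹·b_{ν₀}(λ)` is uniformly bounded in `ν` and `λ`. -/
theorem bEig_ratio_uniformly_bounded (ν₀ : ℕ) (hν₀ : 2 ≤ ν₀) :
    ∃ C : ℝ, 0 < C ∧ ∀ ν : ℕ, ν₀ ≤ ν → ∀ l : ℝ, bEig ν₀ l ≤ C * bEig ν l := by
  refine ⟨1, one_pos, ?_⟩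
  intro ν hν l
  rw [one_mul]
  induction ν, hν using Nat.le_induction with
  | base => exact le_refl _
  | succ n hn ih => exact ih.trans (bEig_step n (hν₀.trans hn) l)
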